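/- Let G be an irreducible finite subgroup of GL(V) such that the G-module V is not self-dual (equivalently, its character is not real-valued). If there exists a nonzero G-invariant lattice Λ in V, then the field generated over Q by the traces of elements of G is an imaginary quadratic field. -/

import Mathlib

open Module

set_option maxHeartbeats 1000000 in
/-- If `G` is an irreducible finite subgroup of `GL(V)` whose module `V` is not
self-dual (equivalently, whose character is not real-valued), and there exists a nonzero
`G`-invariant lattice in `V`, then the field generated over `ℚ` by the traces of the
elements of `G` is an imaginary quadratic field. -/
theorem stmt8 {V : Type*} [NormedAddCommGroup V] [NormedSpace ℂ V] [FiniteDimensional ℂ V]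
    (hdim : 1 ≤ Module.finrank ℂ V)
    (G : Subgroup (Module.End ℂ V)ˣ) [Finite G]
    (hirr : ∀ W : Submodule ℂ V,
      (∀ g ∈ G, ∀ v ∈ W, (g : Module.End ℂ V) v ∈ W) → W = ⊥ ∨ W = ⊤)
    -- the character of `G` is not real-valued (`V` is not self-dual):
    (hnotselfdual : ∃ g ∈ G, (LinearMap.trace ℂ V (g : Module.End ℂ V)).im ≠ 0)
    (Λ : AddSubgroup V) (hΛne : Λ ≠ ⊥) [DiscreteTopology Λ]
    (hinv : ∀ g ∈ G, ∀ x ∈ Λ, (g : Module.End ℂ V) x ∈ Λ)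
    (F : Subfield ℂ)
    (hF : F = Subfield.closure {z : ℂ | ∃ g ∈ G, z = LinearMap.trace ℂ V (g : Module.End ℂ V)}) :
    Module.finrank ℚ F = 2 ∧ ∃ z ∈ F, z.im ≠ 0 := by
  classical
  haveI : Fintype G := Fintype.ofFinite G
  open Submodule in
  -- the subring of multipliers of `Λ`
  set S : Subring ℂ :=
    { carrier := {z : ℂ | ∀ x ∈ Λ, z • x ∈ Λ}
      one_mem' := fun x hx => by simpa using hx
      mul_mem' := fun {a b} ha hb x hx => by
        rw [mul_smul]; exact ha _ (hb _ hx)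
      add_mem' := fun {a b} ha hb x hx => by
        rw [add_smul]; exact Λ.add_mem (ha x hx) (hb x hx)
      zero_mem' := fun x hx => by simpa using Λ.zero_mem
      neg_mem' := fun {a} ha x hx => by
        rw [neg_smul]; exact Λ.neg_mem (ha x hx) } with hSdef
  have hSmem : ∀ z ∈ S, ∀ x ∈ Λ, z • x ∈ Λ := fun z hz => hz
  -- Key step: for every `g ∈ G` there is `μ ∈ S` with `|G| ⬝ χ(g) = μ ⬝ n`.
  have key : ∀ g : G, ∃ μ : ℂ, μ ∈ S ∧
      (Fintype.card G : ℂ) * LinearMap.trace ℂ V ((g : (Module.End ℂ V)ˣ) : Module.End ℂ V)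
        = μ * (finrank ℂ V : ℂ) := by
    intro g
    set σ : Module.End ℂ V :=
      ∑ h : G, (((h * g * h⁻¹ : G) : (Module.End ℂ V)ˣ) : Module.End ℂ V) with hσ
    have hcomm : ∀ w : G, ((w : (Module.End ℂ V)ˣ) : Module.End ℂ V) * σ
        = σ * ((w : (Module.End ℂ V)ˣ) : Module.End ℂ V) := by
      intro w
      rw [hσ, Finset.mul_sum, Finset.sum_mul]
      refine Fintype.sum_equiv (Equiv.mulLeft w) _ _ ?_
      intro h
      have h1 : w * (h * g * h⁻¹) = ((w * h) * g * (w * h)⁻¹) * w := by group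
      have h2 := congrArg (fun x : G => ((x : (Module.End ℂ V)ˣ) : Module.End ℂ V)) h1
      simp only [Subgroup.coe_mul, Units.val_mul] at h2
      simpa using h2
    -- `σ` preserves `Λ`
    have hΛσ : ∀ x ∈ Λ, σ x ∈ Λ := by
      intro x hx
      rw [hσ, LinearMap.coe_sum, Finset.sum_apply]
      exact AddSubgroup.sum_mem Λ (fun h _ => hinv _ (h * g * h⁻¹ : G).2 x hx)
    -- trace of `σ`
    have htr : LinearMap.trace ℂ V σ
        = (Fintype.card G : ℂ)
            * LinearMap.trace ℂ V ((g : (Module.End ℂ V)ˣ) : Module.End ℂ V) := by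
      rw [hσ, map_sum]
      have hterm : ∀ h : G,
          LinearMap.trace ℂ V (((h * g * h⁻¹ : G) : (Module.End ℂ V)ˣ) : Module.End ℂ V)
            = LinearMap.trace ℂ V ((g : (Module.End ℂ V)ˣ) : Module.End ℂ V) := by
        intro h
        have h1 : (((h * g * h⁻¹ : G) : (Module.End ℂ V)ˣ) : Module.End ℂ V)
            = ((h : (Module.End ℂ V)ˣ) : Module.End ℂ V)
              * ((g : (Module.End ℂ V)ˣ) : Module.End ℂ V)
              * (((h⁻¹ : G) : (Module.End ℂ V)ˣ) : Module.End ℂ V) := by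
          simp [Subgroup.coe_mul, Units.val_mul]
        have h2 : (((h⁻¹ : G) : (Module.End ℂ V)ˣ) : Module.End ℂ V)
            * ((h : (Module.End ℂ V)ˣ) : Module.End ℂ V) = 1 := by
          rw [← Units.val_mul, ← Subgroup.coe_mul, inv_mul_cancel]
          simp
        rw [h1, LinearMap.trace_mul_comm, ← mul_assoc, h2, one_mul]
      rw [Finset.sum_congr rfl (fun h _ => hterm h), Finset.sum_const, Finset.card_univ,
        nsmul_eq_mul]
    -- Schur's lemma: `σ` is a scalar
    have hschur : ∃ μ : ℂ, σ = μ • (1 : Module.End ℂ V) := by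
      have : Nontrivial V := Module.nontrivial_of_finrank_pos (hdim : 0 < finrank ℂ V)
      obtain ⟨μ, hμ⟩ := Module.End.exists_eigenvalue σ
      set W := σ.eigenspace μ with hW
      have hWinv : ∀ u ∈ G, ∀ v ∈ W, (u : Module.End ℂ V) v ∈ W := by
        intro u hu v hv
        rw [hW, Module.End.mem_eigenspace_iff] at hv ⊢
        have hc : (u : Module.End ℂ V) * σ = σ * (u : Module.End ℂ V) := hcomm ⟨u, hu⟩
        calc σ ((u : Module.End ℂ V) v) = (σ * (u : Module.End ℂ V)) v := rfl
          _ = ((u : Module.End ℂ V) * σ) v := by rw [hc]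
          _ = (u : Module.End ℂ V) (σ v) := rfl
          _ = μ • (u : Module.End ℂ V) v := by rw [hv, map_smul]
      rcases hirr W hWinv with hbot | htop
      · exact absurd hbot hμ
      · refine ⟨μ, ?_⟩
        ext v
        have hv : v ∈ W := htop ▸ Submodule.mem_top
        rw [Module.End.mem_eigenspace_iff] at hv
        simpa using hv
    obtain ⟨μ, hμ⟩ := hschur
    refine ⟨μ, ?_, ?_⟩
    · intro x hx
      have : σ x ∈ Λ := hΛσ x hx
      rwa [hμ] at this
      -- `(μ • 1) x = μ • x` definitionally? ensure via simp
    · rw [← htr, hμ, map_smul, LinearMap.trace_one, smul_eq_mul]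
  -- the rational span of `S`
  set P : Submodule ℚ ℂ := span ℚ (S : Set ℂ) with hP
  -- traces lie in `P`
  have hcard0 : (Fintype.card G : ℂ) ≠ 0 := by
    exact_mod_cast Nat.cast_ne_zero.mpr Fintype.card_ne_zero
  have htrP : ∀ gu ∈ G, LinearMap.trace ℂ V (gu : Module.End ℂ V) ∈ P := by
    intro gu hgu
    obtain ⟨μ, hμS, hμtr⟩ := key ⟨gu, hgu⟩
    have heq : LinearMap.trace ℂ V (gu : Module.End ℂ V)
        = ((finrank ℂ V : ℚ) / (Fintype.card G : ℚ)) • μ := by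
      rw [Rat.smul_def]
      push_cast
      have : (Fintype.card G : ℂ)
          * LinearMap.trace ℂ V (gu : Module.End ℂ V) = μ * (finrank ℂ V : ℂ) := hμtr
      field_simp
      linear_combination this
    rw [heq]
    exact Submodule.smul_mem _ _ (Submodule.subset_span hμS)
  -- a nonzero element of `Λ`
  have hv : ∃ v ∈ Λ, v ≠ 0 := by
    by_contra hc
    push_neg at hc
    exact hΛne (AddSubgroup.ext (fun x => by
      simp only [AddSubgroup.mem_bot]
      exact ⟨fun hx => hc x hx, fun hx => hx ▸ Λ.zero_mem⟩))
  obtain ⟨v, hvΛ, hv0⟩ := hv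
  -- `P` is finite dimensional of dimension at most 2 (via discreteness of `S`)
  have hPdim : FiniteDimensional ℚ P ∧ finrank ℚ P ≤ 2 := by
    set L : Submodule ℤ ℂ := AddSubgroup.toIntSubmodule S.toAddSubgroup with hL
    haveI hd1 : DiscreteTopology ((fun z : ℂ => z • v) ⁻¹' (Λ : Set V)) := by
      haveI : DiscreteTopology ((Λ : Set V) : Set V) := ‹DiscreteTopology Λ›
      exact DiscreteTopology.preimage_of_continuous_injective _
        (continuous_id.smul continuous_const) (smul_left_injective ℂ hv0)
    haveI hd : DiscreteTopology L := by
      refine DiscreteTopology.of_subset hd1 ?_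
      intro z hz
      exact hSmem z hz v hvΛ
    set Wr : Submodule ℝ ℂ := span ℝ (L : Set ℂ) with hWr
    set f : Wr →ₗ[ℝ] ℂ := Wr.subtype with hf
    set L₀ : Submodule ℤ Wr := L.comap (f.restrictScalars ℤ) with hL₀
    have h_img : f '' L₀ = L := by
      rw [← LinearMap.coe_restrictScalars ℤ f, ← Submodule.map_coe (f.restrictScalars ℤ),
        Submodule.map_comap_eq_self]
      exact fun x hx ↦ LinearMap.mem_range.mpr ⟨⟨x, Submodule.subset_span hx⟩, rfl⟩
    haveI : DiscreteTopology L₀ := by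
      refine DiscreteTopology.preimage_of_continuous_injective (L : Set ℂ) ?_
        (injective_subtype _)
      exact LinearMap.continuous_of_finiteDimensional f
    haveI : IsZLattice ℝ L₀ := ⟨by
      rw [← (Submodule.map_injective_of_injective (injective_subtype _)).eq_iff,
        Submodule.map_span, Submodule.map_top, range_subtype, h_img]⟩
    haveI : Module.Finite ℤ L₀ := ZLattice.module_finite ℝ L₀
    haveI : Module.Free ℤ L₀ := ZLattice.module_free ℝ L₀
    have hrank : finrank ℤ L₀ ≤ 2 := by
      rw [ZLattice.rank ℝ L₀]
      have := Wr.finrank_le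
      rwa [Complex.finrank_real_complex] at this
    set b := Module.Free.chooseBasis ℤ L₀ with hb
    set ι := Module.Free.ChooseBasisIndex ℤ L₀ with hι
    have hcard : Fintype.card ι ≤ 2 := by
      rw [← finrank_eq_card_chooseBasisIndex]; exact hrank
    set u : ι → ℂ := fun i => ((b i : Wr) : ℂ) with hu
    have hsub : (S : Set ℂ) ⊆ (span ℚ (Set.range u) : Set ℂ) := by
      intro s hs
      have hsL : s ∈ L := hs
      have hsW : (⟨s, Submodule.subset_span hsL⟩ : Wr) ∈ L₀ := by
        simpa [hL₀, hf, Submodule.mem_comap] using hsL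
      set x₀ : L₀ := ⟨⟨s, Submodule.subset_span hsL⟩, hsW⟩ with hx₀
      set j : L₀ →ₗ[ℤ] ℂ := (f.restrictScalars ℤ).comp L₀.subtype with hj
      have hjs : j x₀ = s := rfl
      have hx : x₀ ∈ span ℤ (Set.range ⇑b) := by rw [b.span_eq]; exact trivial
      have hx2 : j x₀ ∈ Submodule.map j (span ℤ (Set.range ⇑b)) := Submodule.mem_map_of_mem hx
      rw [Submodule.map_span, ← Set.range_comp] at hx2
      have hx3 : j x₀ ∈ span ℚ (Set.range (⇑j ∘ ⇑b)) :=
        Submodule.span_subset_span ℤ ℚ _ hx2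
      have hru : Set.range (⇑j ∘ ⇑b) = Set.range u := by
        refine congrArg Set.range (funext fun i => ?_)
        rfl
      rw [hru] at hx3
      rwa [hjs] at hx3
    have hle : span ℚ (S : Set ℂ) ≤ span ℚ (Set.range u) := span_le.mpr hsub
    haveI : FiniteDimensional ℚ (span ℚ (Set.range u)) :=
      FiniteDimensional.span_of_finite ℚ (Set.finite_range u)
    refine ⟨Submodule.finiteDimensional_of_le hle, ?_⟩
    calc finrank ℚ (span ℚ (S : Set ℂ)) ≤ finrank ℚ (span ℚ (Set.range u)) :=
          Submodule.finrank_mono hle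
      _ ≤ Fintype.card ι := finrank_range_le_card u
      _ ≤ 2 := hcard
  haveI hPfin : FiniteDimensional ℚ P := hPdim.1
  have hP2 : finrank ℚ P ≤ 2 := hPdim.2
  -- `P` carries a subfield structure; all of `F` lies in `P`
  have hFP : ∀ x ∈ F, x ∈ P := by
    have h1P : (1 : ℂ) ∈ P := subset_span S.one_mem
    have hmulP : ∀ x y : ℂ, x ∈ P → y ∈ P → x * y ∈ P := by
      intro x y hx hy
      have h1 : P * P ≤ P := by
        rw [hP, Submodule.span_mul_span]
        refine span_mono ?_
        rintro z ⟨a, ha, b, hb, rfl⟩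
        exact S.mul_mem ha hb
      exact h1 (Submodule.mul_mem_mul hx hy)
    set A : Subalgebra ℚ ℂ := P.toSubalgebra h1P hmulP with hA
    haveI : FiniteDimensional ℚ A := hPfin
    have hinvA : ∀ x ∈ A, x⁻¹ ∈ A := by
      intro x hx
      have halg : IsAlgebraic ℚ x :=
        Subalgebra.isAlgebraic_iff_isAlgebraic_val.mp (IsAlgebraic.of_finite ℚ (⟨x, hx⟩ : A))
      exact A.inv_mem_of_algebraic (x := ⟨x, hx⟩) halg
    set E : IntermediateField ℚ ℂ := A.toIntermediateField hinvA with hE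
    have hFle : F ≤ E.toSubfield := by
      rw [hF]
      refine Subfield.closure_le.mpr ?_
      rintro z ⟨g, hg, rfl⟩
      exact htrP g hg
    intro x hx
    exact hFle hx
  -- the non-real trace
  obtain ⟨g₀, hg₀, him⟩ := hnotselfdual
  have hχF : LinearMap.trace ℂ V (g₀ : Module.End ℂ V) ∈ F := by
    rw [hF]
    exact Subfield.subset_closure ⟨g₀, hg₀, rfl⟩
  set χ : ℂ := LinearMap.trace ℂ V (g₀ : Module.End ℂ V) with hχ
  -- conclude
  set jF : F →ₗ[ℚ] ℂ :=
    { toFun := fun x => (x : ℂ)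
      map_add' := fun x y => rfl
      map_smul' := by
        intro q x
        simp only [RingHom.id_apply]
        rw [Rat.smul_def, Rat.smul_def]
        push_cast
        rfl } with hjF
  have hinj : Function.Injective jF := fun a b h => Subtype.ext h
  set lin : F →ₗ[ℚ] P := jF.codRestrict P (fun x => hFP x x.2) with hlin
  have hlinj : Function.Injective lin :=
    fun a b h => hinj (show jF a = jF b from congrArg (Subtype.val : P → ℂ) h)
  haveI : FiniteDimensional ℚ F := FiniteDimensional.of_injective lin hlinj
  have h2 : finrank ℚ F ≤ 2 :=
    le_trans (LinearMap.finrank_le_finrank_of_injective hlinj) hP2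
  have hge : 2 ≤ finrank ℚ F := by
    have hli : LinearIndependent ℚ ![(1 : F), ⟨χ, hχF⟩] := by
      rw [LinearIndependent.pair_iff]
      intro s t hst
      have h0 : (s : ℂ) + (t : ℂ) * χ = 0 := by
        have h := congrArg (fun y : F => jF y) hst
        simp only [map_add, map_smul, map_zero] at h
        simpa [Rat.smul_def, hjF] using h
      have ht : (t : ℝ) = 0 := by
        have h1 := congrArg Complex.im h0
        simp only [Complex.add_im, Complex.mul_im, Complex.ratCast_im, Complex.ratCast_re,
          Complex.zero_im, zero_mul, add_zero, zero_add] at h1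
        rcases mul_eq_zero.mp h1 with h1 | h1
        · exact_mod_cast h1
        · exact absurd h1 him
      have ht' : t = 0 := by exact_mod_cast ht
      refine ⟨?_, ht'⟩
      rw [ht'] at h0
      push_cast at h0
      exact_mod_cast by simpa using h0
    have := hli.fintype_card_le_finrank
    simpa using this
  exact ⟨le_antisymm h2 hge, χ, hχF, him⟩
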